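/- arXiv:1911.02641 — 3 statements merged into one kernel-verified Lean document; each statement's English description precedes it below -/
import Mathlib

section
/- Let H be symmetric positive semidefinite, G have full row rank p, and ρ > 0. Define E11 := (H+ρI_q)⁻¹ − (H+ρI_q)⁻¹ Gᵀ (G (H+ρI_q)⁻¹ Gᵀ)⁻¹ G (H+ρI_q)⁻¹. Then rank(E11) = q − p. -/
open Matrix

theorem stmt1 {q p : ℕ} (H : Matrix (Fin q) (Fin q) ℝ) (G : Matrix (Fin p) (Fin q) ℝ)
    (hH : H.PosSemidef) (hG : G.rank = p) (hpq : p ≤ q) (ρ : ℝ) (hρ : 0 < ρ)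
    (E11 : Matrix (Fin q) (Fin q) ℝ)
    (hE11 : E11 = (H + ρ • 1)⁻¹ -
      (H + ρ • 1)⁻¹ * Gᵀ * (G * (H + ρ • 1)⁻¹ * Gᵀ)⁻¹ * G * (H + ρ • 1)⁻¹) :
    E11.rank = q - p := by
  classical
  set M : Matrix (Fin q) (Fin q) ℝ := H + ρ • 1 with hMdef
  have hone : ((ρ : ℝ) • (1 : Matrix (Fin q) (Fin q) ℝ)).PosDef := by
    rw [smul_one_eq_diagonal]
    exact posDef_diagonal_iff.mpr fun i => hρ
  have hM : M.PosDef := Matrix.PosDef.posSemidef_add hH hone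
  have hS : M⁻¹.PosDef := hM.inv
  -- Gᵀ *ᵥ is injective
  have hkerGT : LinearMap.ker (Gᵀ.mulVecLin) = ⊥ := by
    have h2 := LinearMap.finrank_range_add_finrank_ker (Gᵀ.mulVecLin)
    have h3 : Gᵀ.rank = p := by rw [rank_transpose, hG]
    rw [← Matrix.rank, h3] at h2
    simp only [Module.finrank_pi, Fintype.card_fin] at h2
    have : Module.finrank ℝ (LinearMap.ker Gᵀ.mulVecLin) = 0 := by omega
    exact Submodule.finrank_eq_zero.mp this
  have hGT : ∀ v, Gᵀ *ᵥ v = 0 → v = 0 := ker_mulVecLin_eq_bot_iff.mp hkerGT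
  -- K is positive definite
  have hK : (G * M⁻¹ * Gᵀ).PosDef := by
    refine Matrix.PosDef.of_dotProduct_mulVec_pos ?_ ?_
    · have h := hS.isHermitian
      show (G * M⁻¹ * Gᵀ)ᴴ = _
      rw [conjTranspose_mul, conjTranspose_mul, h.eq]
      simp only [conjTranspose_eq_transpose_of_trivial, transpose_transpose]
      rw [Matrix.mul_assoc]
    · intro x hx
      have hy : Gᵀ *ᵥ x ≠ 0 := fun h => hx (hGT x h)
      have h := hS.dotProduct_mulVec_pos hy
      have hrw : star x ⬝ᵥ ((G * M⁻¹ * Gᵀ) *ᵥ x)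
          = star (Gᵀ *ᵥ x) ⬝ᵥ (M⁻¹ *ᵥ (Gᵀ *ᵥ x)) := by
        rw [show (G * M⁻¹ * Gᵀ) *ᵥ x = G *ᵥ (M⁻¹ *ᵥ (Gᵀ *ᵥ x)) by
          rw [← mulVec_mulVec, ← mulVec_mulVec]]
        rw [dotProduct_mulVec, mulVec_transpose]
        simp
      rw [hrw]
      exact h
  have hMd : IsUnit M.det := (isUnit_iff_isUnit_det M).mp hM.isUnit
  have hKd : IsUnit (G * M⁻¹ * Gᵀ).det := (isUnit_iff_isUnit_det _).mp hK.isUnit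
  have hKK : (G * M⁻¹ * Gᵀ) * (G * M⁻¹ * Gᵀ)⁻¹ = 1 := mul_nonsing_inv _ hKd
  have hMM : M⁻¹ * M = 1 := nonsing_inv_mul _ hMd
  have hGE : G * E11 = 0 := by
    rw [hE11, Matrix.mul_sub, sub_eq_zero]
    rw [show G * (M⁻¹ * Gᵀ * (G * M⁻¹ * Gᵀ)⁻¹ * G * M⁻¹)
        = (G * M⁻¹ * Gᵀ * (G * M⁻¹ * Gᵀ)⁻¹) * (G * M⁻¹) by
      simp only [Matrix.mul_assoc], hKK, Matrix.one_mul]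
  have hEM : E11 * M = 1 - M⁻¹ * Gᵀ * (G * M⁻¹ * Gᵀ)⁻¹ * G := by
    rw [hE11, Matrix.sub_mul, hMM]
    congr 1
    rw [show M⁻¹ * Gᵀ * (G * M⁻¹ * Gᵀ)⁻¹ * G * M⁻¹ * M
        = M⁻¹ * Gᵀ * (G * M⁻¹ * Gᵀ)⁻¹ * G * (M⁻¹ * M) by
      simp only [Matrix.mul_assoc], hMM, mul_one]
  have hrange : LinearMap.range E11.mulVecLin = LinearMap.ker G.mulVecLin := by
    apply le_antisymm
    · rintro y ⟨x, rfl⟩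
      simp only [LinearMap.mem_ker, mulVecLin_apply, mulVec_mulVec, hGE, zero_mulVec]
    · intro x hx
      simp only [LinearMap.mem_ker, mulVecLin_apply] at hx
      refine ⟨M *ᵥ x, ?_⟩
      simp only [mulVecLin_apply, mulVec_mulVec, hEM, sub_mulVec, one_mulVec]
      rw [← mulVec_mulVec, hx, mulVec_zero, sub_zero]
  have hkerG : Module.finrank ℝ (LinearMap.ker G.mulVecLin) = q - p := by
    have h2 := LinearMap.finrank_range_add_finrank_ker (G.mulVecLin)
    rw [← Matrix.rank, hG] at h2
    simp only [Module.finrank_pi, Fintype.card_fin] at h2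
    omega
  rw [Matrix.rank, hrange, hkerG]
end

section
/- With H, G, ρ, E11 as specified, the matrix (H+ρI_q)((1/ρ)I_q − E11)(H+ρI_q) equals (1/ρ)H² + H + Gᵀ(G(H+ρI_q)⁻¹Gᵀ)⁻¹G. -/
open Matrix

theorem stmt3 {q p : ℕ} (H : Matrix (Fin q) (Fin q) ℝ) (G : Matrix (Fin p) (Fin q) ℝ)
    (hH : H.PosSemidef) (hG : G.rank = p) (hpq : p ≤ q) (ρ : ℝ) (hρ : 0 < ρ)
    (E11 : Matrix (Fin q) (Fin q) ℝ)
    (hE11 : E11 = (H + ρ • 1)⁻¹ -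
      (H + ρ • 1)⁻¹ * Gᵀ * (G * (H + ρ • 1)⁻¹ * Gᵀ)⁻¹ * G * (H + ρ • 1)⁻¹) :
    (H + ρ • 1) * ((1 / ρ) • (1 : Matrix (Fin q) (Fin q) ℝ) - E11) * (H + ρ • 1) =
      (1 / ρ) • (H * H) + H + Gᵀ * (G * (H + ρ • 1)⁻¹ * Gᵀ)⁻¹ * G := by
  set A := H + ρ • (1 : Matrix (Fin q) (Fin q) ℝ) with hA
  have hApd : A.PosDef := by
    refine Matrix.PosDef.posSemidef_add hH ?_
    rw [Matrix.smul_one_eq_diagonal]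
    exact Matrix.posDef_diagonal_iff.mpr (fun _ => hρ)
  have h1 : A * A⁻¹ = 1 := Matrix.mul_nonsing_inv _ (isUnit_iff_ne_zero.mpr hApd.det_pos.ne')
  have h2 : A⁻¹ * A = 1 := Matrix.nonsing_inv_mul _ (isUnit_iff_ne_zero.mpr hApd.det_pos.ne')
  set M := (G * A⁻¹ * Gᵀ)⁻¹ with hM
  have key : A * E11 * A = A - Gᵀ * M * G := by
    rw [hE11]
    rw [Matrix.mul_sub, Matrix.sub_mul]
    congr 1
    · rw [h1, Matrix.one_mul]
    · rw [show A * (A⁻¹ * Gᵀ * M * G * A⁻¹) = (A * A⁻¹) * (Gᵀ * M * G) * A⁻¹ by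
        simp [Matrix.mul_assoc], h1, Matrix.one_mul, Matrix.mul_assoc, h2, Matrix.mul_one]
  have expand : A * ((1 / ρ) • (1 : Matrix (Fin q) (Fin q) ℝ) - E11) * A
      = (1 / ρ) • (A * A) - A * E11 * A := by
    rw [Matrix.mul_sub, Matrix.sub_mul, Matrix.mul_smul, Matrix.mul_one, Matrix.smul_mul]
  rw [expand, key, hA]
  have hρ' : ρ ≠ 0 := ne_of_gt hρ
  rw [Matrix.add_mul, Matrix.mul_add, Matrix.mul_add]
  simp only [Matrix.smul_mul, Matrix.mul_smul, Matrix.one_mul, Matrix.mul_one, smul_smul,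
    one_div, inv_mul_cancel₀ hρ', mul_inv_cancel₀ hρ', one_smul]
  match_scalars <;> field_simp <;> ring
end

section
/- Assume the augmented state x = (x, z^{(0)}, μ^{(0)}) satisfies K^{(j)} x ∈ Z for all j ∈ {1,…,M}, where K^{(j)} := [ (Σ_{i=0}^{j−1} (ρE11)^i) E12 F , (ρE11)^j , (ρE11)^{j−1}((1/ρ)I_q − E11) ] and μ^{(0)} is the third block of x. If μ^{(0)} enters the recursion z^{(j+1)} = proj_Z(K^{(1)}(x, z^{(j)}, μ^{(j)})), μ^{(j+1)} = ρ(K^{(1)}(x, z^{(j)}, μ^{(j)}) − z^{(j+1)}) with z^{(0)}, μ^{(0)} the blocks of x, then for all j ∈ {1,…,M}: z^{(j)} = K^{(j)} x and μ^{(j)} = 0. -/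
open Matrix

/-- `Kapp ρ E11 E12 F j x z μ = K⁽ʲ⁾ 𝐱` where
`K⁽ʲ⁾ = [ (Σ_{i<j} (ρE₁₁)ⁱ) E₁₂ F , (ρE₁₁)ʲ , (ρE₁₁)^{j-1}((1/ρ)I − E₁₁) ]`
acts on the augmented state `𝐱 = (x, z, μ)`. -/
noncomputable def Kapp {n p q : ℕ} (ρ : ℝ) (E11 : Matrix (Fin q) (Fin q) ℝ)
    (E12 : Matrix (Fin q) (Fin p) ℝ) (F : Matrix (Fin p) (Fin n) ℝ)
    (j : ℕ) (x : Fin n → ℝ) (z μ : Fin q → ℝ) : Fin q → ℝ :=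
  ((∑ i ∈ Finset.range j, (ρ • E11) ^ i) * E12 * F) *ᵥ x
    + ((ρ • E11) ^ j) *ᵥ z
    + ((ρ • E11) ^ (j - 1) * ((1 / ρ) • 1 - E11)) *ᵥ μ

/-- The ADMM recursion `z⁽ʲ⁺¹⁾ = proj_Z(K⁽¹⁾(x, z⁽ʲ⁾, μ⁽ʲ⁾))`,
`μ⁽ʲ⁺¹⁾ = ρ (K⁽¹⁾(x, z⁽ʲ⁾, μ⁽ʲ⁾) − z⁽ʲ⁺¹⁾)`, returning `(z⁽ʲ⁾, μ⁽ʲ⁾)`. -/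
noncomputable def admmSeq {n p q : ℕ} (ρ : ℝ) (E11 : Matrix (Fin q) (Fin q) ℝ)
    (E12 : Matrix (Fin q) (Fin p) ℝ) (F : Matrix (Fin p) (Fin n) ℝ)
    (proj : (Fin q → ℝ) → (Fin q → ℝ)) (x : Fin n → ℝ) (z0 μ0 : Fin q → ℝ) :
    ℕ → (Fin q → ℝ) × (Fin q → ℝ)
  | 0 => (z0, μ0)
  | (j + 1) =>
      let prev := admmSeq ρ E11 E12 F proj x z0 μ0 j
      let ζ := Kapp ρ E11 E12 F 1 x prev.1 prev.2
      let z' := proj ζ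
      (z', ρ • (ζ - z'))

lemma Kapp_key {n p q : ℕ} (ρ : ℝ) (E11 : Matrix (Fin q) (Fin q) ℝ)
    (E12 : Matrix (Fin q) (Fin p) ℝ) (F : Matrix (Fin p) (Fin n) ℝ)
    (x : Fin n → ℝ) (z0 μ0 : Fin q → ℝ) (j : ℕ) (hj : 1 ≤ j) :
    Kapp ρ E11 E12 F 1 x (Kapp ρ E11 E12 F j x z0 μ0) 0 =
      Kapp ρ E11 E12 F (j+1) x z0 μ0 := by
  obtain ⟨k, rfl⟩ := Nat.exists_eq_add_of_le' hj
  unfold Kapp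
  simp only [Matrix.mulVec_zero, Matrix.mulVec_add, Matrix.mulVec_mulVec,
    add_zero, pow_one, geom_sum_succ, Nat.add_sub_cancel_left,
    Nat.add_sub_cancel, Finset.range_one, Finset.sum_singleton, pow_zero,
    one_mul, Matrix.add_mulVec, add_mul, ← mul_assoc, ← pow_succ']
  set A := ρ • E11 with hA
  set S := A * ∑ i ∈ Finset.range k, A ^ i + 1 with hS
  have hm : (A * S + 1) * E12 * F
      = A * (S * E12 * F) + (1 : Matrix (Fin q) (Fin q) ℝ) * E12 * F := by
    simp [Matrix.add_mul, Matrix.mul_assoc]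
  rw [hm, Matrix.add_mulVec]
  abel

theorem stmt10 {n p q : ℕ} (ρ : ℝ) (hρ : 0 < ρ)
    (E11 : Matrix (Fin q) (Fin q) ℝ) (E12 : Matrix (Fin q) (Fin p) ℝ)
    (F : Matrix (Fin p) (Fin n) ℝ) (lo hi : Fin q → ℝ)
    (hlo : ∀ i, lo i < 0) (hhi : ∀ i, 0 < hi i)
    (x : Fin n → ℝ) (z0 μ0 : Fin q → ℝ) (M : ℕ) (hM : 1 ≤ M)
    (hZ : ∀ j ∈ Finset.Icc 1 M, ∀ i,
      lo i ≤ Kapp ρ E11 E12 F j x z0 μ0 i ∧ Kapp ρ E11 E12 F j x z0 μ0 i ≤ hi i) :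
    ∀ j ∈ Finset.Icc 1 M,
      (admmSeq ρ E11 E12 F (fun v i => max (lo i) (min (hi i) (v i))) x z0 μ0 j).1 =
          Kapp ρ E11 E12 F j x z0 μ0 ∧
      (admmSeq ρ E11 E12 F (fun v i => max (lo i) (min (hi i) (v i))) x z0 μ0 j).2 = 0 := by
  have proj_fix : ∀ j, 1 ≤ j → j ≤ M →
      (fun v i => max (lo i) (min (hi i) (v i))) (Kapp ρ E11 E12 F j x z0 μ0)
        = Kapp ρ E11 E12 F j x z0 μ0 := by
    intro j h1 h2
    funext i
    obtain ⟨hl, hr⟩ := hZ j (Finset.mem_Icc.mpr ⟨h1, h2⟩) i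
    simp only
    rw [min_eq_right hr, max_eq_right hl]
  intro j hj
  rw [Finset.mem_Icc] at hj
  obtain ⟨h1, h2⟩ := hj
  induction j with
  | zero => omega
  | succ k ih =>
    rcases Nat.eq_zero_or_pos k with hk | hk
    · subst hk
      simp only [admmSeq]
      have hfix : (fun i => lo i ⊔ hi i ⊓ Kapp ρ E11 E12 F 1 x z0 μ0 i)
          = Kapp ρ E11 E12 F 1 x z0 μ0 := proj_fix 1 le_rfl h2
      refine ⟨hfix, ?_⟩
      rw [hfix, sub_self, smul_zero]
    · obtain ⟨ihz, ihμ⟩ := ih hk (by omega)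
      simp only [admmSeq]
      rw [ihz, ihμ, Kapp_key ρ E11 E12 F x z0 μ0 k hk]
      have hfix : (fun i => lo i ⊔ hi i ⊓ Kapp ρ E11 E12 F (k+1) x z0 μ0 i)
          = Kapp ρ E11 E12 F (k+1) x z0 μ0 := proj_fix (k+1) (by omega) h2
      refine ⟨hfix, ?_⟩
      rw [hfix, sub_self, smul_zero]
end
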